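/- Let ψ_β(γ) = Σ_{k=1}^{|γ|} (−1)^{k−1}(k−1)! Σ_{π partition of γ into k blocks} exp(−β Σ_{A∈π} Û(A)), where Û(A) = Σ_{σ∈q(A)} W_σ. Then for any partition γ of [n] with |γ| ≥ 2: ψ_β(γ) = −∫_0^β Σ_{σ∈q(γ)} W_σ e^{−β' W_σ} ψ_{β'}(P_σ γ) dβ'. -/

import Mathlib

open scoped Classical

/-- `W_{{α,α'}} = ∑_{i∈α, j∈α'} V_{ij}`, the interaction between two (disjoint) blocks. -/
noncomputable def blockW (n : ℕ) (V : Sym2 (Fin n) → ℝ) (α α' : Finset (Fin n)) : ℝ :=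
  ∑ i ∈ α, ∑ j ∈ α', V s(i, j)

/-- `Û(A) = ∑_{σ ∈ q(A)} W_σ`: the total interaction between distinct blocks of the
family `A`, written as half of the ordered double sum. -/
noncomputable def Uhat (n : ℕ) (V : Sym2 (Fin n) → ℝ) (A : Finset (Finset (Fin n))) : ℝ :=
  (∑ α ∈ A, ∑ α' ∈ A.erase α, blockW n V α α') / 2

/-- `π` is a partition of the family `γ` (a "partition of a partition"). -/
def isPartitionOfFam (n : ℕ) (γ : Finset (Finset (Fin n)))
    (π : Finset (Finset (Finset (Fin n)))) : Prop :=
  (∀ A ∈ π, A.Nonempty) ∧ (∀ A ∈ π, ∀ A' ∈ π, A ≠ A' → Disjoint A A') ∧ π.sup id = γ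

/-- `ψ_β(γ) = ∑_{k=1}^{|γ|} (−1)^{k−1}(k−1)! ∑_{π ∈ Π_k(γ)} e^{−β ∑_{A∈π} Û(A)}`. -/
noncomputable def psi (n : ℕ) (V : Sym2 (Fin n) → ℝ) (β : ℝ)
    (γ : Finset (Finset (Fin n))) : ℝ :=
  ∑ k ∈ Finset.Icc 1 γ.card, (-1 : ℝ) ^ (k - 1) * (Nat.factorial (k - 1) : ℝ) *
    ∑ π ∈ Finset.univ.filter
        (fun π : Finset (Finset (Finset (Fin n))) => isPartitionOfFam n γ π ∧ π.card = k),
      Real.exp (-β * ∑ A ∈ π, Uhat n V A)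

/-- `P_σ γ`: the partition obtained from `γ` by merging the two blocks `α, α'`. -/
def mergeP (n : ℕ) (γ : Finset (Finset (Fin n))) (α α' : Finset (Fin n)) :
    Finset (Finset (Fin n)) :=
  insert (α ∪ α') ((γ.erase α).erase α')

/-- `γ` is a set partition of `[n]`. -/
def isSetPartition (n : ℕ) (γ : Finset (Finset (Fin n))) : Prop :=
  (∀ B ∈ γ, B.Nonempty) ∧ (∀ B ∈ γ, ∀ C ∈ γ, B ≠ C → Disjoint B C) ∧
    γ.sup id = (Finset.univ : Finset (Fin n))

/-! ### Auxiliary lemmas -/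

section Aux
variable {n : ℕ} {V : Sym2 (Fin n) → ℝ}

lemma blockW_symm (α α' : Finset (Fin n)) : blockW n V α α' = blockW n V α' α := by
  unfold blockW
  rw [Finset.sum_comm]
  refine Finset.sum_congr rfl fun i _ => Finset.sum_congr rfl fun j _ => ?_
  rw [Sym2.eq_swap]

lemma blockW_union_left {a b : Finset (Fin n)} (h : Disjoint a b) (c : Finset (Fin n)) :
    blockW n V (a ∪ b) c = blockW n V a c + blockW n V b c := by
  unfold blockW; exact Finset.sum_union h

lemma blockW_union_right (a : Finset (Fin n)) {b c : Finset (Fin n)} (h : Disjoint b c) :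
    blockW n V a (b ∪ c) = blockW n V a b + blockW n V a c := by
  rw [blockW_symm, blockW_union_left h, blockW_symm b a, blockW_symm c a]

lemma blockW_union_union {a b : Finset (Fin n)} (h : Disjoint a b) :
    blockW n V (a ∪ b) (a ∪ b)
      = blockW n V a a + blockW n V b b + 2 * blockW n V a b := by
  rw [blockW_union_left h, blockW_union_right a h, blockW_union_right b h, blockW_symm b a]
  ring

/-- pairwise disjoint family -/
def PWD {α : Type*} (F : Finset (Finset α)) : Prop :=
  ∀ b ∈ F, ∀ c ∈ F, b ≠ c → Disjoint b c

lemma sum_PWD {α M : Type*} [DecidableEq α] [AddCommMonoid M] {F : Finset (Finset α)}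
    (h : PWD F) (f : α → M) :
    ∑ b ∈ F, ∑ i ∈ b, f i = ∑ i ∈ F.sup id, f i := by
  rw [Finset.sup_eq_biUnion]
  exact (Finset.sum_biUnion (fun a ha b hb hab => h a ha b hb hab)).symm

lemma Uhat_eq {F : Finset (Finset (Fin n))} (h : PWD F) :
    Uhat n V F = (blockW n V (F.sup id) (F.sup id) - ∑ b ∈ F, blockW n V b b) / 2 := by
  unfold Uhat
  congr 1
  have h1 : ∀ b ∈ F, ∑ α' ∈ F.erase b, blockW n V b α'
      = (∑ α' ∈ F, blockW n V b α') - blockW n V b b :=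
    fun b hb => Finset.sum_erase_eq_sub hb
  rw [Finset.sum_congr rfl h1, Finset.sum_sub_distrib]
  congr 1
  calc ∑ b ∈ F, ∑ α' ∈ F, blockW n V b α'
      = ∑ b ∈ F, ∑ i ∈ b, ∑ j ∈ F.sup id, V s(i, j) := by
        simp only [blockW]
        refine Finset.sum_congr rfl fun b _ => ?_
        rw [Finset.sum_comm]
        exact Finset.sum_congr rfl fun i _ => sum_PWD h _
    _ = ∑ i ∈ F.sup id, ∑ j ∈ F.sup id, V s(i, j) := sum_PWD h _
    _ = blockW n V (F.sup id) (F.sup id) := rfl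

noncomputable def partOf {α : Type*} (π : Finset (Finset α)) (x : α) : Finset α :=
  if h : ∃ A ∈ π, x ∈ A then h.choose else ∅

lemma partOf_spec {α : Type*} {π : Finset (Finset α)} {x : α} (h : ∃ A ∈ π, x ∈ A) :
    partOf π x ∈ π ∧ x ∈ partOf π x := by
  rw [partOf, dif_pos h]
  exact ⟨h.choose_spec.1, h.choose_spec.2⟩

lemma eq_partOf {α : Type*} {π : Finset (Finset α)}
    (hd : ∀ A ∈ π, ∀ B ∈ π, A ≠ B → Disjoint A B)
    {A : Finset α} {x : α} (hA : A ∈ π) (hx : x ∈ A) : A = partOf π x := by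
  have h : ∃ A ∈ π, x ∈ A := ⟨A, hA, hx⟩
  obtain ⟨hm, hxm⟩ := partOf_spec h
  by_contra hne
  exact (Finset.disjoint_left.mp (hd A hA _ hm hne) hx) hxm

/-- parts of a partition of `γ` are subsets of `γ` -/
lemma pf_subset {γ : Finset (Finset (Fin n))} {π : Finset (Finset (Finset (Fin n)))}
    (hπ : isPartitionOfFam n γ π) {A : Finset (Finset (Fin n))} (hA : A ∈ π) : A ⊆ γ := by
  have := Finset.le_sup (f := id) hA
  rwa [hπ.2.2] at this

lemma pf_card_le {γ : Finset (Finset (Fin n))} {π : Finset (Finset (Finset (Fin n)))}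
    (hπ : isPartitionOfFam n γ π) : π.card ≤ γ.card := by
  classical
  refine Finset.card_le_card_of_injOn
    (fun A => if h : A.Nonempty then h.choose else ∅) (fun A hA => ?_) ?_
  · have hne : A.Nonempty := hπ.1 A hA
    simp only [dif_pos hne]
    exact pf_subset hπ hA hne.choose_spec
  · intro A hA B hB hEq
    simp only [Finset.mem_coe] at hA hB
    have hAne : A.Nonempty := hπ.1 A hA
    have hBne : B.Nonempty := hπ.1 B hB
    simp only [dif_pos hAne, dif_pos hBne] at hEq
    by_contra hne
    have h1 : hAne.choose ∈ A := hAne.choose_spec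
    have h2 : hAne.choose ∈ B := hEq ▸ hBne.choose_spec
    exact (Finset.disjoint_left.mp (hπ.2.1 A hA B hB hne) h1) h2

lemma pf_filter_empty {γ : Finset (Finset (Fin n))} {k : ℕ} (hk : γ.card < k) :
    (Finset.univ.filter
      (fun π : Finset (Finset (Finset (Fin n))) => isPartitionOfFam n γ π ∧ π.card = k))
      = ∅ := by
  rw [Finset.filter_eq_empty_iff]
  rintro π - ⟨hπ, hcard⟩
  exact absurd (hcard ▸ pf_card_le hπ) (not_le.mpr hk)

end Aux

section Merge
variable {n : ℕ} {V : Sym2 (Fin n) → ℝ}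

/-- `samePart π a b`: `a` and `b` lie in a common part of `π`. -/
def samePart {α : Type*} (π : Finset (Finset α)) (a b : α) : Prop :=
  ∃ A ∈ π, a ∈ A ∧ b ∈ A

/-- merge the two points `a, b` of a part into the new point `m` -/
def mrgF {α : Type*} [DecidableEq α] (a b m : α) (A : Finset α) : Finset α :=
  if a ∈ A then insert m ((A.erase a).erase b) else A

/-- split the point `m` of a part back into `a, b` -/
def splF {α : Type*} [DecidableEq α] (a b m : α) (A : Finset α) : Finset α :=
  if m ∈ A then insert a (insert b (A.erase m)) else A

variable {γ : Finset (Finset (Fin n))} {α α' : Finset (Fin n)}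

lemma merged_ne_left (hγ : isSetPartition n γ) (hα : α ∈ γ) (hα' : α' ∈ γ) (hne : α ≠ α') :
    α ∪ α' ≠ α := by
  intro h
  have hd : Disjoint α α' := hγ.2.1 α hα α' hα' hne
  have hsub : α' ⊆ α := by rw [← h]; exact Finset.subset_union_right
  obtain ⟨x, hx⟩ := hγ.1 α' hα'
  exact (Finset.disjoint_right.mp hd hx) (hsub hx)

lemma merged_ne_right (hγ : isSetPartition n γ) (hα : α ∈ γ) (hα' : α' ∈ γ) (hne : α ≠ α') :
    α ∪ α' ≠ α' := by
  intro h
  have hd : Disjoint α α' := hγ.2.1 α hα α' hα' hne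
  have hsub : α ⊆ α' := by rw [← h]; exact Finset.subset_union_left
  obtain ⟨x, hx⟩ := hγ.1 α hα
  exact (Finset.disjoint_left.mp hd hx) (hsub hx)

lemma merged_not_mem (hγ : isSetPartition n γ) (hα : α ∈ γ) (hα' : α' ∈ γ) (hne : α ≠ α') :
    α ∪ α' ∉ γ := by
  intro hmem
  have hd2 : Disjoint α (α ∪ α') :=
    hγ.2.1 α hα _ hmem (Ne.symm (merged_ne_left hγ hα hα' hne))
  obtain ⟨x, hx⟩ := hγ.1 α hα
  exact (Finset.disjoint_left.mp hd2 hx) (Finset.mem_union_left _ hx)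

lemma mem_mergeP {x : Finset (Fin n)} :
    x ∈ mergeP n γ α α' ↔ x = α ∪ α' ∨ (x ∈ γ ∧ x ≠ α ∧ x ≠ α') := by
  simp only [mergeP, Finset.mem_insert, Finset.mem_erase]
  tauto

lemma left_not_mem_mergeP (hγ : isSetPartition n γ) (hα : α ∈ γ) (hα' : α' ∈ γ)
    (hne : α ≠ α') : α ∉ mergeP n γ α α' := by
  rw [mem_mergeP]
  rintro ((h | h) : _ ∨ _)
  · exact merged_ne_left hγ hα hα' hne h.symm
  · exact h.2.1 rfl

lemma right_not_mem_mergeP (hγ : isSetPartition n γ) (hα : α ∈ γ) (hα' : α' ∈ γ)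
    (hne : α ≠ α') : α' ∉ mergeP n γ α α' := by
  rw [mem_mergeP]
  rintro ((h | h) : _ ∨ _)
  · exact merged_ne_right hγ hα hα' hne h.symm
  · exact h.2.2 rfl

lemma mergeP_card (hγ : isSetPartition n γ) (hα : α ∈ γ) (hα' : α' ∈ γ) (hne : α ≠ α') :
    (mergeP n γ α α').card = γ.card - 1 := by
  have h1 : α ∪ α' ∉ (γ.erase α).erase α' := fun h =>
    merged_not_mem hγ hα hα' hne (Finset.mem_of_mem_erase (Finset.mem_of_mem_erase h))
  have h2 : α' ∈ γ.erase α := Finset.mem_erase.mpr ⟨Ne.symm hne, hα'⟩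
  have h3 : 2 ≤ γ.card := by
    have := Finset.one_lt_card.mpr ⟨α, hα, α', hα', hne⟩
    omega
  rw [mergeP, Finset.card_insert_of_notMem h1, Finset.card_erase_of_mem h2,
    Finset.card_erase_of_mem hα]
  omega

lemma mergeP_isSetPartition (hγ : isSetPartition n γ) (hα : α ∈ γ) (hα' : α' ∈ γ)
    (hne : α ≠ α') : isSetPartition n (mergeP n γ α α') := by
  have hd : Disjoint α α' := hγ.2.1 α hα α' hα' hne
  refine ⟨?_, ?_, ?_⟩
  · intro B hB
    rcases mem_mergeP.mp hB with h | h
    · subst h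
      obtain ⟨x, hx⟩ := hγ.1 α hα
      exact ⟨x, Finset.mem_union_left _ hx⟩
    · exact hγ.1 B h.1
  · intro B hB C hC hBC
    rcases mem_mergeP.mp hB with h | h <;> rcases mem_mergeP.mp hC with h' | h'
    · exact absurd (h.trans h'.symm) hBC
    · subst h
      exact Finset.disjoint_union_left.mpr
        ⟨hγ.2.1 α hα C h'.1 (fun e => h'.2.1 e.symm),
         hγ.2.1 α' hα' C h'.1 (fun e => h'.2.2 e.symm)⟩
    · subst h'
      exact (Finset.disjoint_union_left.mpr
        ⟨hγ.2.1 α hα B h.1 (fun e => h.2.1 e.symm),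
         hγ.2.1 α' hα' B h.1 (fun e => h.2.2 e.symm)⟩).symm
    · exact hγ.2.1 B h.1 C h'.1 hBC
  · apply Finset.eq_univ_of_forall
    intro x
    rw [Finset.mem_sup]
    have hx : x ∈ γ.sup id := by rw [hγ.2.2]; exact Finset.mem_univ x
    obtain ⟨B, hB, hxB⟩ := Finset.mem_sup.mp hx
    by_cases h1 : B = α
    · exact ⟨α ∪ α', mem_mergeP.mpr (Or.inl rfl), Finset.mem_union_left _ (h1 ▸ hxB)⟩
    by_cases h2 : B = α'
    · exact ⟨α ∪ α', mem_mergeP.mpr (Or.inl rfl), Finset.mem_union_right _ (h2 ▸ hxB)⟩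
    · exact ⟨B, mem_mergeP.mpr (Or.inr ⟨hB, h1, h2⟩), hxB⟩

end Merge

section Bij
set_option maxHeartbeats 1000000
variable {n : ℕ} {V : Sym2 (Fin n) → ℝ}
variable {γ : Finset (Finset (Fin n))} {α α' : Finset (Fin n)}

lemma pf_forward (hγ : isSetPartition n γ) (hα : α ∈ γ) (hα' : α' ∈ γ) (hne : α ≠ α')
    {π : Finset (Finset (Finset (Fin n)))} (hπ : isPartitionOfFam n γ π)
    (hsp : samePart π α α') :
    isPartitionOfFam n (mergeP n γ α α') (π.image (mrgF α α' (α ∪ α'))) ∧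
    Set.InjOn (mrgF α α' (α ∪ α')) ↑π ∧
    (∀ A ∈ π, splF α α' (α ∪ α') (mrgF α α' (α ∪ α') A) = A) := by
  obtain ⟨hnem, hdis, hsup⟩ := hπ
  have hμγ : α ∪ α' ∉ γ := merged_not_mem hγ hα hα' hne
  obtain ⟨A₀', hA₀', hsp1, hsp2⟩ := hsp
  set A₀ := partOf π α with hA₀def
  have hA₀eq : A₀' = A₀ := eq_partOf hdis hA₀' hsp1
  have hA₀ : A₀ ∈ π := hA₀eq ▸ hA₀'
  have haA₀ : α ∈ A₀ := hA₀eq ▸ hsp1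
  have hbA₀ : α' ∈ A₀ := hA₀eq ▸ hsp2
  have hsub : ∀ A ∈ π, A ⊆ γ := fun A hA => pf_subset ⟨hnem, hdis, hsup⟩ hA
  have hmA : ∀ A ∈ π, α ∪ α' ∉ A := fun A hA hmem => hμγ (hsub A hA hmem)
  have haA : ∀ A ∈ π, A ≠ A₀ → α ∉ A := fun A hA hne' hmem =>
    hne' (eq_partOf hdis hA hmem)
  have hbA : ∀ A ∈ π, A ≠ A₀ → α' ∉ A := fun A hA hne' hmem => by
    have h1 : A = partOf π α' := eq_partOf hdis hA hmem
    have h2 : A₀ = partOf π α' := eq_partOf hdis hA₀ hbA₀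
    exact hne' (h1.trans h2.symm)
  have hmrg_other : ∀ A ∈ π, A ≠ A₀ → mrgF α α' (α ∪ α') A = A := fun A hA h =>
    if_neg (haA A hA h)
  have hmrg0 : mrgF α α' (α ∪ α') A₀ = insert (α ∪ α') ((A₀.erase α).erase α') :=
    if_pos haA₀
  have hmem0 : α ∪ α' ∈ mrgF α α' (α ∪ α') A₀ := by
    rw [hmrg0]; exact Finset.mem_insert_self _ _
  have hmemμ : ∀ A ∈ π, A ≠ A₀ → α ∪ α' ∉ mrgF α α' (α ∪ α') A := fun A hA h => by
    rw [hmrg_other A hA h]; exact hmA A hA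
  have hmrg0_mem : ∀ x, x ∈ mrgF α α' (α ∪ α') A₀ ↔
      x = α ∪ α' ∨ (x ∈ A₀ ∧ x ≠ α ∧ x ≠ α') := by
    intro x
    rw [hmrg0]
    simp only [Finset.mem_insert, Finset.mem_erase]
    tauto
  have hinj : Set.InjOn (mrgF α α' (α ∪ α')) ↑π := by
    intro A hA B hB hEq
    rw [Finset.mem_coe] at hA hB
    by_cases hAA : A = A₀ <;> by_cases hBB : B = A₀
    · rw [hAA, hBB]
    · exact absurd (hEq ▸ (hAA ▸ hmem0)) (hmemμ B hB hBB)
    · exact absurd (hEq ▸ (hBB ▸ hmem0)) (hmemμ A hA hAA)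
    · rw [hmrg_other A hA hAA, hmrg_other B hB hBB] at hEq; exact hEq
  refine ⟨⟨?_, ?_, ?_⟩, hinj, ?_⟩
  · -- nonempty parts
    intro X hX
    obtain ⟨A, hA, rfl⟩ := Finset.mem_image.mp hX
    by_cases hAA : A = A₀
    · subst hAA; exact ⟨α ∪ α', hmem0⟩
    · rw [hmrg_other A hA hAA]; exact hnem A hA
  · -- pairwise disjoint parts
    intro X hX Y hY hXY
    obtain ⟨A, hA, rfl⟩ := Finset.mem_image.mp hX
    obtain ⟨B, hB, rfl⟩ := Finset.mem_image.mp hY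
    have hAB : A ≠ B := fun h => hXY (by rw [h])
    have key : ∀ C ∈ π, C ≠ A₀ →
        Disjoint (mrgF α α' (α ∪ α') A₀) (mrgF α α' (α ∪ α') C) := by
      intro C hC hCA₀
      rw [hmrg_other C hC hCA₀, Finset.disjoint_left]
      intro x hx hxC
      rcases (hmrg0_mem x).mp hx with h | h
      · exact hmA C hC (h ▸ hxC)
      · exact (Finset.disjoint_left.mp (hdis A₀ hA₀ C hC (Ne.symm hCA₀)) h.1) hxC
    by_cases hAA : A = A₀
    · subst hAA
      exact key B hB (Ne.symm hAB)
    by_cases hBB : B = A₀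
    · subst hBB
      exact (key A hA hAA).symm
    · rw [hmrg_other A hA hAA, hmrg_other B hB hBB]
      exact hdis A hA B hB hAB
  · -- sup = mergeP
    apply Finset.ext
    intro x
    rw [Finset.mem_sup]
    constructor
    · rintro ⟨X, hX, hxX⟩
      obtain ⟨A, hA, rfl⟩ := Finset.mem_image.mp hX
      by_cases hAA : A = A₀
      · subst hAA
        rcases (hmrg0_mem x).mp hxX with h | h
        · exact mem_mergeP.mpr (Or.inl h)
        · exact mem_mergeP.mpr (Or.inr ⟨hsub A₀ hA₀ h.1, h.2.1, h.2.2⟩)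
      · rw [hmrg_other A hA hAA] at hxX
        exact mem_mergeP.mpr
          (Or.inr ⟨hsub A hA hxX, fun e => haA A hA hAA (e ▸ hxX),
            fun e => hbA A hA hAA (e ▸ hxX)⟩)
    · intro hx
      rcases mem_mergeP.mp hx with h | h
      · exact ⟨_, Finset.mem_image_of_mem _ hA₀, h ▸ hmem0⟩
      · obtain ⟨hxγ, hxa, hxb⟩ := h
        have : x ∈ π.sup id := hsup ▸ hxγ
        obtain ⟨A, hA, hxA⟩ := Finset.mem_sup.mp this
        by_cases hAA : A = A₀
        · subst hAA
          exact ⟨_, Finset.mem_image_of_mem _ hA₀,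
            (hmrg0_mem x).mpr (Or.inr ⟨hxA, hxa, hxb⟩)⟩
        · exact ⟨_, Finset.mem_image_of_mem _ hA,
            by rw [hmrg_other A hA hAA]; exact hxA⟩
  · -- left inverse
    intro A hA
    by_cases hAA : A = A₀
    · subst hAA
      rw [hmrg0]
      have hμ' : α ∪ α' ∉ (A₀.erase α).erase α' := fun h =>
        hmA A₀ hA₀ (Finset.mem_of_mem_erase (Finset.mem_of_mem_erase h))
      rw [splF, if_pos (Finset.mem_insert_self _ _), Finset.erase_insert hμ']
      have hb' : α' ∈ A₀.erase α := Finset.mem_erase.mpr ⟨Ne.symm hne, hbA₀⟩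
      rw [Finset.insert_erase hb', Finset.insert_erase haA₀]
    · rw [hmrg_other A hA hAA]
      exact if_neg (hmA A hA)

lemma pf_backward (hγ : isSetPartition n γ) (hα : α ∈ γ) (hα' : α' ∈ γ) (hne : α ≠ α')
    {π : Finset (Finset (Finset (Fin n)))} (hπ : isPartitionOfFam n (mergeP n γ α α') π) :
    isPartitionOfFam n γ (π.image (splF α α' (α ∪ α'))) ∧
    samePart (π.image (splF α α' (α ∪ α'))) α α' ∧
    Set.InjOn (splF α α' (α ∪ α')) ↑π ∧
    (∀ A ∈ π, mrgF α α' (α ∪ α') (splF α α' (α ∪ α') A) = A) := by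
  obtain ⟨hnem, hdis, hsup⟩ := hπ
  have hd : Disjoint α α' := hγ.2.1 α hα α' hα' hne
  have hμγ : α ∪ α' ∉ γ := merged_not_mem hγ hα hα' hne
  have haδ : α ∉ mergeP n γ α α' := left_not_mem_mergeP hγ hα hα' hne
  have hbδ : α' ∉ mergeP n γ α α' := right_not_mem_mergeP hγ hα hα' hne
  have hμδ : α ∪ α' ∈ mergeP n γ α α' := mem_mergeP.mpr (Or.inl rfl)
  have hsub : ∀ A ∈ π, A ⊆ mergeP n γ α α' := fun A hA => pf_subset ⟨hnem, hdis, hsup⟩ hA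
  have haA : ∀ A ∈ π, α ∉ A := fun A hA hmem => haδ (hsub A hA hmem)
  have hbA : ∀ A ∈ π, α' ∉ A := fun A hA hmem => hbδ (hsub A hA hmem)
  have hex : ∃ A ∈ π, α ∪ α' ∈ A := by
    have : α ∪ α' ∈ π.sup id := hsup ▸ hμδ
    exact Finset.mem_sup.mp this
  set B₀ := partOf π (α ∪ α') with hB₀def
  obtain ⟨hB₀, hμB₀⟩ := partOf_spec hex
  have hμA : ∀ A ∈ π, A ≠ B₀ → α ∪ α' ∉ A := fun A hA hne' hmem =>
    hne' (eq_partOf hdis hA hmem)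
  have hspl_other : ∀ A ∈ π, A ≠ B₀ → splF α α' (α ∪ α') A = A := fun A hA h =>
    if_neg (hμA A hA h)
  have hspl0 : splF α α' (α ∪ α') B₀ = insert α (insert α' (B₀.erase (α ∪ α'))) :=
    if_pos hμB₀
  have hmem0 : α ∈ splF α α' (α ∪ α') B₀ := by
    rw [hspl0]; exact Finset.mem_insert_self _ _
  have hmem0' : α' ∈ splF α α' (α ∪ α') B₀ := by
    rw [hspl0]; exact Finset.mem_insert_of_mem (Finset.mem_insert_self _ _)
  have hmemα : ∀ A ∈ π, A ≠ B₀ → α ∉ splF α α' (α ∪ α') A := fun A hA h => by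
    rw [hspl_other A hA h]; exact haA A hA
  have hspl0_mem : ∀ x, x ∈ splF α α' (α ∪ α') B₀ ↔
      x = α ∨ x = α' ∨ (x ∈ B₀ ∧ x ≠ α ∪ α') := by
    intro x
    rw [hspl0]
    simp only [Finset.mem_insert, Finset.mem_erase]
    tauto
  have hinj : Set.InjOn (splF α α' (α ∪ α')) ↑π := by
    intro A hA B hB hEq
    rw [Finset.mem_coe] at hA hB
    by_cases hAA : A = B₀ <;> by_cases hBB : B = B₀
    · rw [hAA, hBB]
    · exact absurd (hEq ▸ (hAA ▸ hmem0)) (hmemα B hB hBB)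
    · exact absurd (hEq ▸ (hBB ▸ hmem0)) (hmemα A hA hAA)
    · rw [hspl_other A hA hAA, hspl_other B hB hBB] at hEq; exact hEq
  refine ⟨⟨?_, ?_, ?_⟩, ?_, hinj, ?_⟩
  · intro X hX
    obtain ⟨A, hA, rfl⟩ := Finset.mem_image.mp hX
    by_cases hAA : A = B₀
    · subst hAA; exact ⟨α, hmem0⟩
    · rw [hspl_other A hA hAA]; exact hnem A hA
  · intro X hX Y hY hXY
    obtain ⟨A, hA, rfl⟩ := Finset.mem_image.mp hX
    obtain ⟨B, hB, rfl⟩ := Finset.mem_image.mp hY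
    have hAB : A ≠ B := fun h => hXY (by rw [h])
    have key : ∀ C ∈ π, C ≠ B₀ →
        Disjoint (splF α α' (α ∪ α') B₀) (splF α α' (α ∪ α') C) := by
      intro C hC hCB₀
      rw [hspl_other C hC hCB₀, Finset.disjoint_left]
      intro x hx hxC
      rcases (hspl0_mem x).mp hx with h | h | h
      · exact haA C hC (h ▸ hxC)
      · exact hbA C hC (h ▸ hxC)
      · exact (Finset.disjoint_left.mp (hdis B₀ hB₀ C hC (Ne.symm hCB₀)) h.1) hxC
    by_cases hAA : A = B₀
    · subst hAA; exact key B hB (Ne.symm hAB)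
    by_cases hBB : B = B₀
    · subst hBB; exact (key A hA hAA).symm
    · rw [hspl_other A hA hAA, hspl_other B hB hBB]
      exact hdis A hA B hB hAB
  · apply Finset.ext
    intro x
    rw [Finset.mem_sup]
    constructor
    · rintro ⟨X, hX, hxX⟩
      obtain ⟨A, hA, rfl⟩ := Finset.mem_image.mp hX
      by_cases hAA : A = B₀
      · subst hAA
        rcases (hspl0_mem x).mp hxX with h | h | h
        · exact h ▸ hα
        · exact h ▸ hα'
        · rcases mem_mergeP.mp (hsub B₀ hB₀ h.1) with h' | h'
          · exact absurd h' h.2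
          · exact h'.1
      · rw [hspl_other A hA hAA] at hxX
        rcases mem_mergeP.mp (hsub A hA hxX) with h' | h'
        · exact absurd h' (hμA A hA hAA ∘ fun e => e ▸ hxX)
        · exact h'.1
    · intro hx
      by_cases hxa : x = α
      · exact ⟨_, Finset.mem_image_of_mem _ hB₀, by rw [hxa]; exact hmem0⟩
      by_cases hxb : x = α'
      · exact ⟨_, Finset.mem_image_of_mem _ hB₀, by rw [hxb]; exact hmem0'⟩
      · have hxδ : x ∈ mergeP n γ α α' := mem_mergeP.mpr (Or.inr ⟨hx, hxa, hxb⟩)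
        have : x ∈ π.sup id := hsup ▸ hxδ
        obtain ⟨A, hA, hxA⟩ := Finset.mem_sup.mp this
        by_cases hAA : A = B₀
        · subst hAA
          refine ⟨_, Finset.mem_image_of_mem _ hB₀, (hspl0_mem x).mpr ?_⟩
          exact Or.inr (Or.inr ⟨hxA, fun e => hμγ (e ▸ hx)⟩)
        · exact ⟨_, Finset.mem_image_of_mem _ hA,
            by rw [hspl_other A hA hAA]; exact hxA⟩
  · exact ⟨_, Finset.mem_image_of_mem _ hB₀, hmem0, hmem0'⟩
  · intro A hA
    by_cases hAA : A = B₀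
    · subst hAA
      rw [hspl0, mrgF, if_pos (Finset.mem_insert_self _ _)]
      have ha1 : α ∉ insert α' (B₀.erase (α ∪ α')) := by
        simp only [Finset.mem_insert, Finset.mem_erase]
        rintro (h | h)
        · exact hne h
        · exact haA B₀ hB₀ h.2
      rw [Finset.erase_insert ha1]
      have hb1 : α' ∉ B₀.erase (α ∪ α') := fun h =>
        hbA B₀ hB₀ (Finset.mem_of_mem_erase h)
      rw [Finset.erase_insert hb1, Finset.insert_erase hμB₀]
    · rw [hspl_other A hA hAA]
      exact if_neg (haA A hA)

end Bij

section UhatMerge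
set_option maxHeartbeats 1000000
variable {n : ℕ} {V : Sym2 (Fin n) → ℝ}
variable {γ : Finset (Finset (Fin n))} {α α' : Finset (Fin n)}

lemma Uhat_merge_part (hγ : isSetPartition n γ) (hα : α ∈ γ) (hα' : α' ∈ γ) (hne : α ≠ α')
    {A₀ : Finset (Finset (Fin n))} (hsub : A₀ ⊆ γ) (haA₀ : α ∈ A₀) (hbA₀ : α' ∈ A₀) :
    Uhat n V (insert (α ∪ α') ((A₀.erase α).erase α'))
      = Uhat n V A₀ - blockW n V α α' := by
  have hd : Disjoint α α' := hγ.2.1 α hα α' hα' hne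
  have hpw : PWD A₀ := fun b hb c hc h => hγ.2.1 b (hsub hb) c (hsub hc) h
  have hμA₀ : α ∪ α' ∉ A₀ := fun h => merged_not_mem hγ hα hα' hne (hsub h)
  have hμE : α ∪ α' ∉ (A₀.erase α).erase α' := fun h =>
    hμA₀ (Finset.mem_of_mem_erase (Finset.mem_of_mem_erase h))
  have hEmem : ∀ x ∈ (A₀.erase α).erase α', x ∈ A₀ ∧ x ≠ α ∧ x ≠ α' := by
    intro x hx
    rw [Finset.mem_erase, Finset.mem_erase] at hx
    exact ⟨hx.2.2, hx.2.1, hx.1⟩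
  have hpw' : PWD (insert (α ∪ α') ((A₀.erase α).erase α')) := by
    intro b hb c hc hbc
    rcases Finset.mem_insert.mp hb with rfl | hb' <;>
      rcases Finset.mem_insert.mp hc with rfl | hc'
    · exact absurd rfl hbc
    · obtain ⟨hcA, hca, hcb⟩ := hEmem c hc'
      exact Finset.disjoint_union_left.mpr
        ⟨hγ.2.1 α hα c (hsub hcA) (fun e => hca e.symm),
         hγ.2.1 α' hα' c (hsub hcA) (fun e => hcb e.symm)⟩
    · obtain ⟨hbA, hba, hbb⟩ := hEmem b hb'
      exact (Finset.disjoint_union_left.mpr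
        ⟨hγ.2.1 α hα b (hsub hbA) (fun e => hba e.symm),
         hγ.2.1 α' hα' b (hsub hbA) (fun e => hbb e.symm)⟩).symm
    · exact hpw b (hEmem b hb').1 c (hEmem c hc').1 hbc
  have hsup' : (insert (α ∪ α') ((A₀.erase α).erase α')).sup id = A₀.sup id := by
    apply Finset.ext
    intro x
    rw [Finset.mem_sup, Finset.mem_sup]
    constructor
    · rintro ⟨B, hB, hxB⟩
      rcases Finset.mem_insert.mp hB with rfl | hB'
      · rcases Finset.mem_union.mp hxB with h | h
        · exact ⟨α, haA₀, h⟩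
        · exact ⟨α', hbA₀, h⟩
      · exact ⟨B, (hEmem B hB').1, hxB⟩
    · rintro ⟨B, hB, hxB⟩
      by_cases h1 : B = α
      · exact ⟨α ∪ α', Finset.mem_insert_self _ _,
          Finset.mem_union_left _ (h1 ▸ hxB)⟩
      by_cases h2 : B = α'
      · exact ⟨α ∪ α', Finset.mem_insert_self _ _,
          Finset.mem_union_right _ (h2 ▸ hxB)⟩
      · exact ⟨B, Finset.mem_insert_of_mem
          (Finset.mem_erase.mpr ⟨h2, Finset.mem_erase.mpr ⟨h1, hB⟩⟩), hxB⟩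
  rw [Uhat_eq hpw', Uhat_eq hpw, hsup']
  have hbE : α' ∈ A₀.erase α := Finset.mem_erase.mpr ⟨Ne.symm hne, hbA₀⟩
  have hsum : ∑ b ∈ insert (α ∪ α') ((A₀.erase α).erase α'), blockW n V b b
      = ∑ b ∈ A₀, blockW n V b b + 2 * blockW n V α α' := by
    rw [Finset.sum_insert hμE, Finset.sum_erase_eq_sub hbE, Finset.sum_erase_eq_sub haA₀,
      blockW_union_union hd]
    ring
  rw [hsum]
  ring

lemma sum_exp_merge (hγ : isSetPartition n γ) (hα : α ∈ γ) (hα' : α' ∈ γ) (hne : α ≠ α')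
    (k : ℕ) (t : ℝ) :
    ∑ π ∈ Finset.univ.filter
        (fun π : Finset (Finset (Finset (Fin n))) =>
          (isPartitionOfFam n γ π ∧ π.card = k) ∧ samePart π α α'),
      Real.exp (-t * ∑ A ∈ π, Uhat n V A)
    = Real.exp (-t * blockW n V α α') *
      ∑ π ∈ Finset.univ.filter
        (fun π : Finset (Finset (Finset (Fin n))) =>
          isPartitionOfFam n (mergeP n γ α α') π ∧ π.card = k),
      Real.exp (-t * ∑ A ∈ π, Uhat n V A) := by
  rw [Finset.mul_sum]
  refine Finset.sum_nbij' (fun π => π.image (mrgF α α' (α ∪ α')))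
    (fun π => π.image (splF α α' (α ∪ α'))) ?_ ?_ ?_ ?_ ?_
  · intro π hπm
    rw [Finset.mem_filter] at hπm ⊢
    obtain ⟨-, ⟨hπ, hcard⟩, hsp⟩ := hπm
    obtain ⟨hpf, hinj, -⟩ := pf_forward hγ hα hα' hne hπ hsp
    exact ⟨Finset.mem_univ _, hpf,
      by rw [Finset.card_image_of_injOn hinj]; exact hcard⟩
  · intro π hπm
    rw [Finset.mem_filter] at hπm ⊢
    obtain ⟨-, hπ, hcard⟩ := hπm
    obtain ⟨hpf, hsp, hinj, -⟩ := pf_backward hγ hα hα' hne hπ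
    exact ⟨Finset.mem_univ _, ⟨⟨hpf,
      by rw [Finset.card_image_of_injOn hinj]; exact hcard⟩, hsp⟩⟩
  · intro π hπm
    rw [Finset.mem_filter] at hπm
    obtain ⟨-, ⟨hπ, hcard⟩, hsp⟩ := hπm
    obtain ⟨-, -, hsm⟩ := pf_forward hγ hα hα' hne hπ hsp
    simp only [Finset.image_image]
    exact (Finset.image_congr (fun A hA => hsm A hA)).trans Finset.image_id
  · intro π hπm
    rw [Finset.mem_filter] at hπm
    obtain ⟨-, hπ, hcard⟩ := hπm
    obtain ⟨-, -, -, hms⟩ := pf_backward hγ hα hα' hne hπ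
    simp only [Finset.image_image]
    exact (Finset.image_congr (fun A hA => hms A hA)).trans Finset.image_id
  · intro π hπm
    rw [Finset.mem_filter] at hπm
    obtain ⟨-, ⟨hπ, hcard⟩, hsp⟩ := hπm
    obtain ⟨-, hinj, -⟩ := pf_forward hγ hα hα' hne hπ hsp
    have himg : ∑ A ∈ π.image (mrgF α α' (α ∪ α')), Uhat n V A
        = ∑ A ∈ π, Uhat n V (mrgF α α' (α ∪ α') A) :=
      Finset.sum_image (fun x hx y hy h => hinj hx hy h)
    obtain ⟨A₀', hA₀', hsp1, hsp2⟩ := hsp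
    have hA₀eq : A₀' = partOf π α := eq_partOf hπ.2.1 hA₀' hsp1
    set A₀ := partOf π α
    have hA₀ : A₀ ∈ π := hA₀eq ▸ hA₀'
    have haA₀ : α ∈ A₀ := hA₀eq ▸ hsp1
    have hbA₀ : α' ∈ A₀ := hA₀eq ▸ hsp2
    have hU : ∑ A ∈ π, Uhat n V (mrgF α α' (α ∪ α') A)
        = ∑ A ∈ π, Uhat n V A - blockW n V α α' := by
      rw [← Finset.sum_erase_add _ _ hA₀,
        ← Finset.sum_erase_add _ (fun A => Uhat n V A) hA₀]
      have h1 : ∀ A ∈ π.erase A₀,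
          Uhat n V (mrgF α α' (α ∪ α') A) = Uhat n V A := by
        intro A hA
        have hAπ : A ∈ π := Finset.mem_of_mem_erase hA
        have hAne : A ≠ A₀ := Finset.ne_of_mem_erase hA
        have : α ∉ A := fun hm => hAne (eq_partOf hπ.2.1 hAπ hm)
        rw [mrgF, if_neg this]
      rw [Finset.sum_congr rfl h1]
      have h2 : Uhat n V (mrgF α α' (α ∪ α') A₀) = Uhat n V A₀ - blockW n V α α' := by
        rw [mrgF, if_pos haA₀]
        exact Uhat_merge_part hγ hα hα' hne (pf_subset hπ hA₀) haA₀ hbA₀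
      rw [h2]
      ring
    rw [himg, hU, ← Real.exp_add]
    congr 1
    ring

end UhatMerge

section Key
set_option maxHeartbeats 1000000
variable {n : ℕ} {V : Sym2 (Fin n) → ℝ}
variable {γ : Finset (Finset (Fin n))}

lemma U_eq_pairsum {π : Finset (Finset (Finset (Fin n)))}
    (hπ : isPartitionOfFam n γ π) :
    ∑ A ∈ π, Uhat n V A
      = (1/2) * ∑ a ∈ γ, ∑ b ∈ γ.erase a,
          if samePart π a b then blockW n V a b else 0 := by
  have h1 : ∀ g : Finset (Fin n) → ℝ, ∑ a ∈ γ, g a = ∑ A ∈ π, ∑ a ∈ A, g a := by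
    intro g
    conv_lhs => rw [← hπ.2.2]
    exact (sum_PWD hπ.2.1 g).symm
  rw [h1 (fun a => ∑ b ∈ γ.erase a, if samePart π a b then blockW n V a b else 0)]
  rw [Finset.mul_sum]
  refine Finset.sum_congr rfl fun A hA => ?_
  have h2 : ∀ a ∈ A, (∑ b ∈ γ.erase a, if samePart π a b then blockW n V a b else 0)
      = ∑ b ∈ A.erase a, blockW n V a b := by
    intro a ha
    have hset : (γ.erase a).filter (fun b => samePart π a b) = A.erase a := by
      apply Finset.ext
      intro b
      rw [Finset.mem_filter, Finset.mem_erase, Finset.mem_erase]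
      constructor
      · rintro ⟨⟨hba, hbγ⟩, C, hC, haC, hbC⟩
        have h3 : C = partOf π a := eq_partOf hπ.2.1 hC haC
        have h4 : A = partOf π a := eq_partOf hπ.2.1 hA ha
        refine ⟨hba, ?_⟩
        rw [h4, ← h3]
        exact hbC
      · rintro ⟨hba, hbA⟩
        exact ⟨⟨hba, hπ.2.2 ▸ (Finset.mem_sup.mpr ⟨A, hA, hbA⟩)⟩, A, hA, ha, hbA⟩
    rw [← hset, Finset.sum_filter]
  rw [Finset.sum_congr rfl h2, Uhat]
  ring

lemma psi_ext (δ : Finset (Finset (Fin n))) (M : ℕ) (hM : δ.card ≤ M) (t : ℝ) :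
    psi n V t δ = ∑ k ∈ Finset.Icc 1 M,
      (-1:ℝ)^(k-1) * (Nat.factorial (k-1) : ℝ) *
      ∑ π ∈ Finset.univ.filter
          (fun π : Finset (Finset (Finset (Fin n))) =>
            isPartitionOfFam n δ π ∧ π.card = k),
        Real.exp (-t * ∑ A ∈ π, Uhat n V A) := by
  unfold psi
  apply Finset.sum_subset (Finset.Icc_subset_Icc_right hM)
  intro k hk hnk
  have hlt : δ.card < k := by
    simp only [Finset.mem_Icc] at hk hnk
    omega
  rw [pf_filter_empty hlt, Finset.sum_empty, mul_zero]

lemma key_k (hγ : isSetPartition n γ) (k : ℕ) (t : ℝ) :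
    ∑ π ∈ Finset.univ.filter
        (fun π : Finset (Finset (Finset (Fin n))) =>
          isPartitionOfFam n γ π ∧ π.card = k),
      (∑ A ∈ π, Uhat n V A) * Real.exp (-t * ∑ A ∈ π, Uhat n V A)
    = (1/2) * ∑ a ∈ γ, ∑ b ∈ γ.erase a,
        blockW n V a b * Real.exp (-t * blockW n V a b) *
        ∑ π ∈ Finset.univ.filter
            (fun π : Finset (Finset (Finset (Fin n))) =>
              isPartitionOfFam n (mergeP n γ a b) π ∧ π.card = k),
          Real.exp (-t * ∑ A ∈ π, Uhat n V A) := by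
  calc ∑ π ∈ Finset.univ.filter
        (fun π : Finset (Finset (Finset (Fin n))) =>
          isPartitionOfFam n γ π ∧ π.card = k),
      (∑ A ∈ π, Uhat n V A) * Real.exp (-t * ∑ A ∈ π, Uhat n V A)
      = ∑ π ∈ Finset.univ.filter
          (fun π : Finset (Finset (Finset (Fin n))) =>
            isPartitionOfFam n γ π ∧ π.card = k),
        (1/2) * ∑ a ∈ γ, ∑ b ∈ γ.erase a,
          (if samePart π a b then
            blockW n V a b * Real.exp (-t * ∑ A ∈ π, Uhat n V A) else 0) := by
        refine Finset.sum_congr rfl fun π hπm => ?_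
        rw [Finset.mem_filter] at hπm
        rw [U_eq_pairsum hπm.2.1, mul_assoc]
        congr 1
        rw [Finset.sum_mul]
        refine Finset.sum_congr rfl fun a _ => ?_
        rw [Finset.sum_mul]
        refine Finset.sum_congr rfl fun b _ => ?_
        rw [ite_mul, zero_mul]
    _ = (1/2) * ∑ a ∈ γ, ∑ b ∈ γ.erase a,
          ∑ π ∈ Finset.univ.filter
            (fun π : Finset (Finset (Finset (Fin n))) =>
              isPartitionOfFam n γ π ∧ π.card = k),
          (if samePart π a b then
            blockW n V a b * Real.exp (-t * ∑ A ∈ π, Uhat n V A) else 0) := by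
        rw [← Finset.mul_sum]
        refine congrArg (fun z => (1/2 : ℝ) * z) ?_
        rw [Finset.sum_comm]
        refine Finset.sum_congr rfl fun a _ => ?_
        rw [Finset.sum_comm]
    _ = (1/2) * ∑ a ∈ γ, ∑ b ∈ γ.erase a,
        blockW n V a b * Real.exp (-t * blockW n V a b) *
        ∑ π ∈ Finset.univ.filter
            (fun π : Finset (Finset (Finset (Fin n))) =>
              isPartitionOfFam n (mergeP n γ a b) π ∧ π.card = k),
          Real.exp (-t * ∑ A ∈ π, Uhat n V A) := by
        refine congrArg (fun z => (1/2 : ℝ) * z) ?_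
        refine Finset.sum_congr rfl fun a ha => ?_
        refine Finset.sum_congr rfl fun b hb => ?_
        have hbγ : b ∈ γ := Finset.mem_of_mem_erase hb
        have hab : a ≠ b := fun e => (Finset.mem_erase.mp hb).1 e.symm
        rw [← Finset.sum_filter, Finset.filter_filter]
        rw [← Finset.mul_sum, sum_exp_merge hγ ha hbγ hab k t, mul_assoc]

lemma key (hγ : isSetPartition n γ) (t : ℝ) :
    ∑ k ∈ Finset.Icc 1 γ.card, (-1:ℝ)^(k-1) * (Nat.factorial (k-1) : ℝ) *
      ∑ π ∈ Finset.univ.filter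
          (fun π : Finset (Finset (Finset (Fin n))) =>
            isPartitionOfFam n γ π ∧ π.card = k),
        (∑ A ∈ π, Uhat n V A) * Real.exp (-t * ∑ A ∈ π, Uhat n V A)
    = (1/2) * ∑ a ∈ γ, ∑ b ∈ γ.erase a,
        blockW n V a b * Real.exp (-t * blockW n V a b) * psi n V t (mergeP n γ a b) := by
  calc ∑ k ∈ Finset.Icc 1 γ.card, (-1:ℝ)^(k-1) * (Nat.factorial (k-1) : ℝ) *
      ∑ π ∈ Finset.univ.filter
          (fun π : Finset (Finset (Finset (Fin n))) =>
            isPartitionOfFam n γ π ∧ π.card = k),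
        (∑ A ∈ π, Uhat n V A) * Real.exp (-t * ∑ A ∈ π, Uhat n V A)
      = ∑ k ∈ Finset.Icc 1 γ.card, ∑ a ∈ γ, ∑ b ∈ γ.erase a,
          (1/2) * ((-1:ℝ)^(k-1) * (Nat.factorial (k-1) : ℝ) *
            (blockW n V a b * Real.exp (-t * blockW n V a b) *
            ∑ π ∈ Finset.univ.filter
                (fun π : Finset (Finset (Finset (Fin n))) =>
                  isPartitionOfFam n (mergeP n γ a b) π ∧ π.card = k),
              Real.exp (-t * ∑ A ∈ π, Uhat n V A))) := by
        refine Finset.sum_congr rfl fun k _ => ?_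
        rw [key_k hγ k t, ← mul_assoc, Finset.mul_sum]
        refine Finset.sum_congr rfl fun a _ => ?_
        rw [Finset.mul_sum]
        refine Finset.sum_congr rfl fun b _ => ?_
        ring
    _ = ∑ a ∈ γ, ∑ b ∈ γ.erase a, ∑ k ∈ Finset.Icc 1 γ.card,
          (1/2) * ((-1:ℝ)^(k-1) * (Nat.factorial (k-1) : ℝ) *
            (blockW n V a b * Real.exp (-t * blockW n V a b) *
            ∑ π ∈ Finset.univ.filter
                (fun π : Finset (Finset (Finset (Fin n))) =>
                  isPartitionOfFam n (mergeP n γ a b) π ∧ π.card = k),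
              Real.exp (-t * ∑ A ∈ π, Uhat n V A))) := by
        rw [Finset.sum_comm]
        refine Finset.sum_congr rfl fun a _ => ?_
        rw [Finset.sum_comm]
    _ = (1/2) * ∑ a ∈ γ, ∑ b ∈ γ.erase a,
        blockW n V a b * Real.exp (-t * blockW n V a b) * psi n V t (mergeP n γ a b) := by
        rw [Finset.mul_sum]
        refine Finset.sum_congr rfl fun a ha => ?_
        rw [Finset.mul_sum]
        refine Finset.sum_congr rfl fun b hb => ?_
        have hbγ : b ∈ γ := Finset.mem_of_mem_erase hb
        have hab : a ≠ b := fun e => (Finset.mem_erase.mp hb).1 e.symm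
        have hM : (mergeP n γ a b).card ≤ γ.card := by
          rw [mergeP_card hγ ha hbγ hab]
          omega
        rw [psi_ext (mergeP n γ a b) γ.card hM t, Finset.mul_sum, Finset.mul_sum]
        refine Finset.sum_congr rfl fun k _ => ?_
        ring

end Key

section Zero
set_option maxHeartbeats 1000000
variable {n : ℕ} {V : Sym2 (Fin n) → ℝ}
variable {γ : Finset (Finset (Fin n))} {a : Finset (Fin n)}

/-- number of partitions of the family `γ` into `k` parts -/
noncomputable def Npart (n : ℕ) (γ : Finset (Finset (Fin n))) (k : ℕ) : ℕ :=
  (Finset.univ.filter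
    (fun π : Finset (Finset (Finset (Fin n))) =>
      isPartitionOfFam n γ π ∧ π.card = k)).card

lemma count_singleton (ha : a ∈ γ) (k : ℕ) :
    (Finset.univ.filter
      (fun π : Finset (Finset (Finset (Fin n))) =>
        (isPartitionOfFam n γ π ∧ π.card = k + 1) ∧ {a} ∈ π)).card
    = Npart n (γ.erase a) k := by
  refine Finset.card_bij' (fun π _ => π.erase {a}) (fun ρ _ => insert {a} ρ) ?_ ?_ ?_ ?_
  · intro π hπm
    rw [Finset.mem_filter] at hπm
    obtain ⟨-, ⟨hπ, hcard⟩, hsing⟩ := hπm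
    rw [Finset.mem_filter]
    refine ⟨Finset.mem_univ _, ⟨?_, ?_, ?_⟩, ?_⟩
    · exact fun A hA => hπ.1 A (Finset.mem_of_mem_erase hA)
    · exact fun A hA B hB h => hπ.2.1 A (Finset.mem_of_mem_erase hA)
        B (Finset.mem_of_mem_erase hB) h
    · apply Finset.ext
      intro x
      rw [Finset.mem_sup, Finset.mem_erase]
      constructor
      · rintro ⟨A, hA, hxA⟩
        have hAπ : A ∈ π := Finset.mem_of_mem_erase hA
        have hAne : A ≠ {a} := Finset.ne_of_mem_erase hA
        refine ⟨?_, hπ.2.2 ▸ Finset.mem_sup.mpr ⟨A, hAπ, hxA⟩⟩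
        intro hxa
        subst hxa
        have h1 : A = partOf π x := eq_partOf hπ.2.1 hAπ hxA
        have h2 : ({x} : Finset (Finset (Fin n))) = partOf π x :=
          eq_partOf hπ.2.1 hsing (Finset.mem_singleton_self x)
        exact hAne (h1.trans h2.symm)
      · rintro ⟨hxa, hxγ⟩
        have : x ∈ π.sup id := hπ.2.2 ▸ hxγ
        obtain ⟨A, hA, hxA⟩ := Finset.mem_sup.mp this
        have hAne : A ≠ {a} := fun h => hxa (Finset.mem_singleton.mp (h ▸ hxA))
        exact ⟨A, Finset.mem_erase.mpr ⟨hAne, hA⟩, hxA⟩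
    · rw [Finset.card_erase_of_mem hsing, hcard]
      omega
  · intro ρ hρm
    rw [Finset.mem_filter] at hρm
    obtain ⟨-, hρ, hcard⟩ := hρm
    have hsing : ({a} : Finset (Finset (Fin n))) ∉ ρ := by
      intro h
      have : a ∈ ρ.sup id := Finset.mem_sup.mpr ⟨{a}, h, Finset.mem_singleton_self a⟩
      rw [hρ.2.2] at this
      exact (Finset.mem_erase.mp this).1 rfl
    have hsub : ∀ A ∈ ρ, A ⊆ γ.erase a := fun A hA => pf_subset hρ hA
    rw [Finset.mem_filter]
    refine ⟨Finset.mem_univ _, ⟨⟨?_, ?_, ?_⟩, ?_⟩, Finset.mem_insert_self _ _⟩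
    · intro A hA
      rcases Finset.mem_insert.mp hA with rfl | hA'
      · exact ⟨a, Finset.mem_singleton_self a⟩
      · exact hρ.1 A hA'
    · intro A hA B hB hAB
      rcases Finset.mem_insert.mp hA with rfl | hA' <;>
        rcases Finset.mem_insert.mp hB with rfl | hB'
      · exact absurd rfl hAB
      · rw [Finset.disjoint_singleton_left]
        exact fun h => (Finset.mem_erase.mp (hsub B hB' h)).1 rfl
      · rw [Finset.disjoint_singleton_right]
        exact fun h => (Finset.mem_erase.mp (hsub A hA' h)).1 rfl
      · exact hρ.2.1 A hA' B hB' hAB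
    · apply Finset.ext
      intro x
      rw [Finset.mem_sup]
      constructor
      · rintro ⟨A, hA, hxA⟩
        rcases Finset.mem_insert.mp hA with rfl | hA'
        · rw [Finset.mem_singleton.mp hxA]; exact ha
        · exact Finset.mem_of_mem_erase (hsub A hA' hxA)
      · intro hxγ
        by_cases hxa : x = a
        · exact ⟨{a}, Finset.mem_insert_self _ _, hxa ▸ Finset.mem_singleton_self a⟩
        · have : x ∈ ρ.sup id := hρ.2.2 ▸ Finset.mem_erase.mpr ⟨hxa, hxγ⟩
          obtain ⟨A, hA, hxA⟩ := Finset.mem_sup.mp this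
          exact ⟨A, Finset.mem_insert_of_mem hA, hxA⟩
    · rw [Finset.card_insert_of_notMem hsing, hcard]
  · intro π hπm
    rw [Finset.mem_filter] at hπm
    exact Finset.insert_erase hπm.2.2
  · intro ρ hρm
    rw [Finset.mem_filter] at hρm
    have hsing : ({a} : Finset (Finset (Fin n))) ∉ ρ := by
      intro h
      have : a ∈ ρ.sup id := Finset.mem_sup.mpr ⟨{a}, h, Finset.mem_singleton_self a⟩
      rw [hρm.2.1.2.2] at this
      exact (Finset.mem_erase.mp this).1 rfl
    exact Finset.erase_insert hsing

end Zero

section Zero2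
set_option maxHeartbeats 1000000
variable {n : ℕ} {V : Sym2 (Fin n) → ℝ}
variable {γ : Finset (Finset (Fin n))} {a : Finset (Fin n)}

lemma erase_image_pf (ha : a ∈ γ) {π : Finset (Finset (Finset (Fin n)))}
    (hπ : isPartitionOfFam n γ π) (hns : ({a} : Finset (Finset (Fin n))) ∉ π) :
    isPartitionOfFam n (γ.erase a) (π.image (fun A => A.erase a)) ∧
    Set.InjOn (fun A : Finset (Finset (Fin n)) => A.erase a) ↑π := by
  have haex : ∃ A ∈ π, a ∈ A := Finset.mem_sup.mp (hπ.2.2 ▸ ha)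
  obtain ⟨hA₀, haA₀⟩ := partOf_spec haex
  set A₀ := partOf π a
  have haA : ∀ A ∈ π, A ≠ A₀ → a ∉ A := fun A hA h hm => h (eq_partOf hπ.2.1 hA hm)
  have hero : ∀ A ∈ π, A ≠ A₀ → A.erase a = A := fun A hA h =>
    Finset.erase_eq_of_notMem (haA A hA h)
  have hA₀ne : (A₀.erase a).Nonempty := by
    rw [Finset.nonempty_iff_ne_empty]
    intro h
    rcases (Finset.erase_eq_empty_iff _ _).mp h with h' | h'
    · exact absurd h' (Finset.nonempty_iff_ne_empty.mp (hπ.1 A₀ hA₀))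
    · exact hns (h' ▸ hA₀)
  have hsub : ∀ A ∈ π, A ⊆ γ := fun A hA => pf_subset hπ hA
  have hinj : Set.InjOn (fun A : Finset (Finset (Fin n)) => A.erase a) ↑π := by
    intro A hA B hB hEq
    rw [Finset.mem_coe] at hA hB
    simp only at hEq
    by_cases hAA : A = A₀ <;> by_cases hBB : B = A₀
    · rw [hAA, hBB]
    · exfalso
      subst hAA
      rw [hero B hB hBB] at hEq
      obtain ⟨x, hx⟩ := hA₀ne
      exact (Finset.disjoint_left.mp (hπ.2.1 A₀ hA₀ B hB (Ne.symm hBB))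
        (Finset.mem_of_mem_erase hx)) (hEq ▸ hx)
    · exfalso
      subst hBB
      rw [hero A hA hAA] at hEq
      obtain ⟨x, hx⟩ := hA₀ne
      exact (Finset.disjoint_left.mp (hπ.2.1 A₀ hA₀ A hA (Ne.symm hAA))
        (Finset.mem_of_mem_erase hx)) (hEq ▸ hx)
    · rw [hero A hA hAA, hero B hB hBB] at hEq
      exact hEq
  refine ⟨⟨?_, ?_, ?_⟩, hinj⟩
  · intro X hX
    obtain ⟨A, hA, rfl⟩ := Finset.mem_image.mp hX
    by_cases hAA : A = A₀
    · subst hAA; exact hA₀ne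
    · rw [hero A hA hAA]; exact hπ.1 A hA
  · intro X hX Y hY hXY
    obtain ⟨A, hA, rfl⟩ := Finset.mem_image.mp hX
    obtain ⟨B, hB, rfl⟩ := Finset.mem_image.mp hY
    have hAB : A ≠ B := fun h => hXY (by rw [h])
    exact Finset.disjoint_of_subset_left (Finset.erase_subset _ _)
      (Finset.disjoint_of_subset_right (Finset.erase_subset _ _) (hπ.2.1 A hA B hB hAB))
  · apply Finset.ext
    intro x
    rw [Finset.mem_sup, Finset.mem_erase]
    constructor
    · rintro ⟨X, hX, hxX⟩
      obtain ⟨A, hA, rfl⟩ := Finset.mem_image.mp hX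
      simp only [id] at hxX
      rw [Finset.mem_erase] at hxX
      exact ⟨hxX.1, hπ.2.2 ▸ Finset.mem_sup.mpr ⟨A, hA, hxX.2⟩⟩
    · rintro ⟨hxa, hxγ⟩
      obtain ⟨A, hA, hxA⟩ := Finset.mem_sup.mp (hπ.2.2 ▸ hxγ)
      exact ⟨A.erase a, Finset.mem_image_of_mem _ hA, Finset.mem_erase.mpr ⟨hxa, hxA⟩⟩

lemma count_nonsingleton (ha : a ∈ γ) (k : ℕ) :
    (Finset.univ.filter
      (fun π : Finset (Finset (Finset (Fin n))) =>
        (isPartitionOfFam n γ π ∧ π.card = k + 1) ∧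
          ({a} : Finset (Finset (Fin n))) ∉ π)).card
    = (k + 1) * Npart n (γ.erase a) (k + 1) := by
  classical
  set s := Finset.univ.filter
      (fun π : Finset (Finset (Finset (Fin n))) =>
        (isPartitionOfFam n γ π ∧ π.card = k + 1) ∧
          ({a} : Finset (Finset (Fin n))) ∉ π) with hs
  set t := Finset.univ.filter
      (fun ρ : Finset (Finset (Finset (Fin n))) =>
        isPartitionOfFam n (γ.erase a) ρ ∧ ρ.card = k + 1) with ht
  have hmaps : ∀ π ∈ s, π.image (fun A => A.erase a) ∈ t := by
    intro π hπm
    rw [hs, Finset.mem_filter] at hπm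
    obtain ⟨-, ⟨hπ, hcard⟩, hns⟩ := hπm
    obtain ⟨hpf, hinj⟩ := erase_image_pf ha hπ hns
    rw [ht, Finset.mem_filter]
    exact ⟨Finset.mem_univ _, hpf,
      by rw [Finset.card_image_of_injOn hinj]; exact hcard⟩
  rw [Finset.card_eq_sum_card_fiberwise hmaps]
  have hfiber : ∀ ρ ∈ t, (s.filter (fun π => π.image (fun A => A.erase a) = ρ)).card
      = k + 1 := by
    intro ρ hρm
    rw [ht, Finset.mem_filter] at hρm
    obtain ⟨-, hρ, hρc⟩ := hρm
    have hsubρ : ∀ X ∈ ρ, X ⊆ γ.erase a := fun X hX => pf_subset hρ hX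
    have haX : ∀ X ∈ ρ, a ∉ X := fun X hX hm =>
      (Finset.mem_erase.mp (hsubρ X hX hm)).1 rfl
    rw [← hρc]
    refine Finset.card_bij' (fun π _ => (partOf π a).erase a)
      (fun B hB => insert (insert a B) (ρ.erase B)) ?_ ?_ ?_ ?_
    · intro π hπm
      rw [Finset.mem_filter, hs, Finset.mem_filter] at hπm
      obtain ⟨⟨-, ⟨hπ, hcard⟩, hns⟩, hfib⟩ := hπm
      have haex : ∃ A ∈ π, a ∈ A := Finset.mem_sup.mp (hπ.2.2 ▸ ha)
      obtain ⟨hA₀, haA₀⟩ := partOf_spec haex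
      show (partOf π a).erase a ∈ ρ
      rw [← hfib]
      exact Finset.mem_image_of_mem _ hA₀
    · intro B hB
      have hanB : a ∉ B := haX B hB
      have hBne : B.Nonempty := hρ.1 B hB
      have hIB : insert a B ∉ ρ.erase B := fun h =>
        haX _ (Finset.mem_of_mem_erase h) (Finset.mem_insert_self a B)
      rw [Finset.mem_filter, hs, Finset.mem_filter]
      refine ⟨⟨Finset.mem_univ _, ⟨⟨?_, ?_, ?_⟩, ?_⟩, ?_⟩, ?_⟩
      · intro X hX
        rcases Finset.mem_insert.mp hX with rfl | hX'
        · exact ⟨a, Finset.mem_insert_self a B⟩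
        · exact hρ.1 X (Finset.mem_of_mem_erase hX')
      · intro X hX Y hY hXY
        have key : ∀ C ∈ ρ.erase B, Disjoint (insert a B) C := by
          intro C hC
          rw [Finset.disjoint_left]
          intro x hx hxC
          rcases Finset.mem_insert.mp hx with rfl | hx'
          · exact haX C (Finset.mem_of_mem_erase hC) hxC
          · exact (Finset.disjoint_left.mp
              (hρ.2.1 B hB C (Finset.mem_of_mem_erase hC)
                (Ne.symm (Finset.ne_of_mem_erase hC))) hx') hxC
        rcases Finset.mem_insert.mp hX with rfl | hX' <;>
          rcases Finset.mem_insert.mp hY with rfl | hY'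
        · exact absurd rfl hXY
        · exact key Y hY'
        · exact (key X hX').symm
        · exact hρ.2.1 X (Finset.mem_of_mem_erase hX') Y (Finset.mem_of_mem_erase hY')
            hXY
      · apply Finset.ext
        intro x
        rw [Finset.mem_sup]
        constructor
        · rintro ⟨X, hX, hxX⟩
          rcases Finset.mem_insert.mp hX with rfl | hX'
          · rcases Finset.mem_insert.mp hxX with rfl | hx'
            · exact ha
            · exact Finset.mem_of_mem_erase (hsubρ B hB hx')
          · exact Finset.mem_of_mem_erase
              (hsubρ X (Finset.mem_of_mem_erase hX') hxX)
        · intro hxγ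
          by_cases hxa : x = a
          · exact ⟨insert a B, Finset.mem_insert_self _ _,
              Finset.mem_insert.mpr (Or.inl hxa)⟩
          · have : x ∈ ρ.sup id := hρ.2.2 ▸ Finset.mem_erase.mpr ⟨hxa, hxγ⟩
            obtain ⟨C, hC, hxC⟩ := Finset.mem_sup.mp this
            by_cases hCB : C = B
            · exact ⟨insert a B, Finset.mem_insert_self _ _,
                Finset.mem_insert_of_mem (hCB ▸ hxC)⟩
            · exact ⟨C, Finset.mem_insert_of_mem
                (Finset.mem_erase.mpr ⟨hCB, hC⟩), hxC⟩
      · rw [Finset.card_insert_of_notMem hIB, Finset.card_erase_of_mem hB, hρc]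
        omega
      · intro h
        rcases Finset.mem_insert.mp h with h' | h'
        · obtain ⟨x, hx⟩ := hBne
          have : x ∈ ({a} : Finset (Finset (Fin n))) :=
            h' ▸ Finset.mem_insert_of_mem hx
          exact hanB (Finset.mem_singleton.mp this ▸ hx)
        · exact haX {a} (Finset.mem_of_mem_erase h') (Finset.mem_singleton_self a)
      · rw [Finset.image_insert, Finset.erase_insert hanB]
        have himgid : (ρ.erase B).image (fun A => A.erase a) = ρ.erase B := by
          refine (Finset.image_congr ?_).trans Finset.image_id
          intro C hC
          exact Finset.erase_eq_of_notMem (haX C (Finset.mem_of_mem_erase hC))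
        rw [himgid, Finset.insert_erase hB]
    · intro π hπm
      rw [Finset.mem_filter, hs, Finset.mem_filter] at hπm
      obtain ⟨⟨-, ⟨hπ, hcard⟩, hns⟩, hfib⟩ := hπm
      have haex : ∃ A ∈ π, a ∈ A := Finset.mem_sup.mp (hπ.2.2 ▸ ha)
      obtain ⟨hA₀, haA₀⟩ := partOf_spec haex
      set A₀ := partOf π a with hA₀def
      have haA : ∀ A ∈ π, A ≠ A₀ → a ∉ A := fun A hA h hm => h (eq_partOf hπ.2.1 hA hm)
      have hins : insert a (A₀.erase a) = A₀ := Finset.insert_erase haA₀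
      have hA₀ne : (A₀.erase a).Nonempty := by
        rw [Finset.nonempty_iff_ne_empty]
        intro h
        rcases (Finset.erase_eq_empty_iff _ _).mp h with h' | h'
        · exact absurd h' (Finset.nonempty_iff_ne_empty.mp (hπ.1 A₀ hA₀))
        · exact hns (h' ▸ hA₀)
      have hρeq : ρ = insert (A₀.erase a) (π.erase A₀) := by
        rw [← hfib]
        conv_lhs => rw [← Finset.insert_erase hA₀]
        rw [Finset.image_insert]
        congr 1
        refine (Finset.image_congr ?_).trans Finset.image_id
        intro C hC
        exact Finset.erase_eq_of_notMem
          (haA C (Finset.mem_of_mem_erase hC) (Finset.ne_of_mem_erase hC))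
      have hnotmem : A₀.erase a ∉ π.erase A₀ := by
        intro h
        have hCπ : A₀.erase a ∈ π := Finset.mem_of_mem_erase h
        have hCne : A₀.erase a ≠ A₀ := by
          intro e
          obtain ⟨x, hx⟩ := hπ.1 A₀ hA₀
          exact (Finset.mem_erase.mp (e ▸ haA₀)).1 rfl
        obtain ⟨x, hx⟩ := hA₀ne
        exact (Finset.disjoint_left.mp (hπ.2.1 _ hCπ A₀ hA₀ hCne) hx)
          (Finset.mem_of_mem_erase hx)
      show insert (insert a (A₀.erase a)) (ρ.erase (A₀.erase a)) = π
      rw [hρeq, Finset.erase_insert hnotmem, hins, Finset.insert_erase hA₀]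
    · intro B hB
      have hanB : a ∉ B := haX B hB
      set πB := insert (insert a B) (ρ.erase B) with hπB
      have hdisB : ∀ A ∈ πB, ∀ C ∈ πB, A ≠ C → Disjoint A C := by
        intro X hX Y hY hXY
        have key : ∀ C ∈ ρ.erase B, Disjoint (insert a B) C := by
          intro C hC
          rw [Finset.disjoint_left]
          intro x hx hxC
          rcases Finset.mem_insert.mp hx with rfl | hx'
          · exact haX C (Finset.mem_of_mem_erase hC) hxC
          · exact (Finset.disjoint_left.mp
              (hρ.2.1 B hB C (Finset.mem_of_mem_erase hC)
                (Ne.symm (Finset.ne_of_mem_erase hC))) hx') hxC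
        rcases Finset.mem_insert.mp hX with rfl | hX' <;>
          rcases Finset.mem_insert.mp hY with rfl | hY'
        · exact absurd rfl hXY
        · exact key Y hY'
        · exact (key X hX').symm
        · exact hρ.2.1 X (Finset.mem_of_mem_erase hX') Y (Finset.mem_of_mem_erase hY')
            hXY
      have h1 : insert a B = partOf πB a :=
        eq_partOf hdisB (Finset.mem_insert_self _ _) (Finset.mem_insert_self a B)
      show (partOf πB a).erase a = B
      rw [← h1, Finset.erase_insert hanB]
  rw [Finset.sum_congr rfl hfiber, Finset.sum_const, smul_eq_mul]
  simp only [Npart, ht]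
  rw [Nat.mul_comm]

end Zero2

section Zero3
set_option maxHeartbeats 1000000
variable {n : ℕ} {V : Sym2 (Fin n) → ℝ}
variable {γ : Finset (Finset (Fin n))} {a : Finset (Fin n)}

lemma Npart_zero (hne : γ.Nonempty) : Npart n γ 0 = 0 := by
  simp only [Npart]
  rw [Finset.card_eq_zero, Finset.filter_eq_empty_iff]
  rintro π - ⟨hπ, hcard⟩
  obtain rfl := Finset.card_eq_zero.mp hcard
  have h : (∅ : Finset (Finset (Finset (Fin n)))).sup id = γ := hπ.2.2
  rw [Finset.sup_empty] at h
  exact hne.ne_empty h.symm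

lemma Npart_gt {k : ℕ} (hlt : γ.card < k) : Npart n γ k = 0 := by
  simp only [Npart]
  rw [pf_filter_empty hlt, Finset.card_empty]

lemma Npart_succ (ha : a ∈ γ) (k : ℕ) :
    Npart n γ (k + 1)
      = Npart n (γ.erase a) k + (k + 1) * Npart n (γ.erase a) (k + 1) := by
  rw [← count_singleton ha k, ← count_nonsingleton ha k]
  have h := Finset.card_filter_add_card_filter_not
    (s := Finset.univ.filter
      (fun π : Finset (Finset (Finset (Fin n))) =>
        isPartitionOfFam n γ π ∧ π.card = k + 1))
    (p := fun π => ({a} : Finset (Finset (Fin n))) ∈ π)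
  rw [Finset.filter_filter, Finset.filter_filter] at h
  simp only [Npart]
  exact h.symm

lemma psi_zero (hc : 2 ≤ γ.card) : psi n V 0 γ = 0 := by
  obtain ⟨a, ha⟩ := Finset.card_pos.mp (by omega : 0 < γ.card)
  have hcer : (γ.erase a).card = γ.card - 1 := Finset.card_erase_of_mem ha
  have hγ'ne : (γ.erase a).Nonempty := Finset.card_pos.mp (by omega)
  have hN0 : Npart n (γ.erase a) 0 = 0 := Npart_zero hγ'ne
  have hNtop : Npart n (γ.erase a) γ.card = 0 := Npart_gt (by omega)
  have hpsi : psi n V 0 γ = ∑ k ∈ Finset.Icc 1 γ.card,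
      (-1:ℝ)^(k-1) * (Nat.factorial (k-1) : ℝ) * (Npart n γ k : ℝ) := by
    unfold psi
    refine Finset.sum_congr rfl fun k _ => ?_
    congr 1
    simp only [neg_zero, zero_mul, Real.exp_zero, Finset.sum_const, nsmul_eq_mul,
      mul_one, Npart]
  rw [hpsi]
  have hre : ∑ k ∈ Finset.Icc 1 γ.card,
        (-1:ℝ)^(k-1) * (Nat.factorial (k-1) : ℝ) * (Npart n γ k : ℝ)
      = ∑ i ∈ Finset.range γ.card,
        (-1:ℝ)^i * (Nat.factorial i : ℝ) * (Npart n γ (i+1) : ℝ) := by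
    refine Finset.sum_nbij' (fun k => k - 1) (fun i => i + 1) ?_ ?_ ?_ ?_ ?_
    · intro k hk
      simp only [Finset.mem_Icc] at hk
      simp only [Finset.mem_range]
      omega
    · intro i hi
      simp only [Finset.mem_range] at hi
      simp only [Finset.mem_Icc]
      omega
    · intro k hk
      simp only [Finset.mem_Icc] at hk
      show k - 1 + 1 = k
      omega
    · intro i _
      show i + 1 - 1 = i
      omega
    · intro k hk
      simp only [Finset.mem_Icc] at hk
      have h1 : k - 1 + 1 = k := by omega
      rw [h1]
  rw [hre]
  have hterm : ∀ i ∈ Finset.range γ.card,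
      (-1:ℝ)^i * (Nat.factorial i : ℝ) * (Npart n γ (i+1) : ℝ)
      = ((-1:ℝ)^i * (Nat.factorial i : ℝ) * (Npart n (γ.erase a) i : ℝ))
        - ((-1:ℝ)^(i+1) * (Nat.factorial (i+1) : ℝ)
            * (Npart n (γ.erase a) (i+1) : ℝ)) := by
    intro i _
    rw [Npart_succ ha i, pow_succ, Nat.factorial_succ]
    push_cast
    ring
  rw [Finset.sum_congr rfl hterm,
    Finset.sum_range_sub' (fun i => (-1:ℝ)^i * (Nat.factorial i : ℝ)
      * (Npart n (γ.erase a) i : ℝ)) γ.card]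
  rw [hN0, hNtop]
  simp

end Zero3

section Final
set_option maxHeartbeats 1000000
variable {n : ℕ} {V : Sym2 (Fin n) → ℝ}

lemma psi_hasDerivAt (γ : Finset (Finset (Fin n))) (t : ℝ) :
    HasDerivAt (fun b => psi n V b γ)
      (-∑ k ∈ Finset.Icc 1 γ.card, (-1:ℝ)^(k-1) * (Nat.factorial (k-1) : ℝ) *
        ∑ π ∈ Finset.univ.filter
            (fun π : Finset (Finset (Finset (Fin n))) =>
              isPartitionOfFam n γ π ∧ π.card = k),
          (∑ A ∈ π, Uhat n V A) * Real.exp (-t * ∑ A ∈ π, Uhat n V A)) t := by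
  have h : HasDerivAt (fun b => psi n V b γ)
      (∑ k ∈ Finset.Icc 1 γ.card, (-1:ℝ)^(k-1) * (Nat.factorial (k-1) : ℝ) *
        ∑ π ∈ Finset.univ.filter
            (fun π : Finset (Finset (Finset (Fin n))) =>
              isPartitionOfFam n γ π ∧ π.card = k),
          Real.exp (-t * ∑ A ∈ π, Uhat n V A) * -(∑ A ∈ π, Uhat n V A)) t := by
    unfold psi
    refine HasDerivAt.fun_sum fun k _ => ?_
    refine HasDerivAt.const_mul _ ?_
    refine HasDerivAt.fun_sum fun π _ => ?_
    have h1 : HasDerivAt (fun b : ℝ => -b * ∑ A ∈ π, Uhat n V A)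
        (-(∑ A ∈ π, Uhat n V A)) t := by
      have := (hasDerivAt_id t).neg.mul_const (∑ A ∈ π, Uhat n V A)
      simpa using this
    have h2 := (Real.hasDerivAt_exp (-t * ∑ A ∈ π, Uhat n V A)).comp t h1
    simpa [Function.comp_def] using h2
  convert h using 1
  rw [← Finset.sum_neg_distrib]
  refine Finset.sum_congr rfl fun k _ => ?_
  rw [← mul_neg, ← Finset.sum_neg_distrib]
  congr 1
  refine Finset.sum_congr rfl fun π _ => ?_
  ring

lemma psi_continuous (δ : Finset (Finset (Fin n))) :
    Continuous (fun t : ℝ => psi n V t δ) := by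
  unfold psi
  refine continuous_finset_sum _ fun k _ => Continuous.mul continuous_const ?_
  refine continuous_finset_sum _ fun π _ => ?_
  exact Real.continuous_exp.comp ((continuous_id.neg).mul continuous_const)

lemma integrand_continuous (γ : Finset (Finset (Fin n))) :
    Continuous (fun t : ℝ => (1/2 : ℝ) * ∑ a ∈ γ, ∑ b ∈ γ.erase a,
      blockW n V a b * Real.exp (-t * blockW n V a b) * psi n V t (mergeP n γ a b)) := by
  refine Continuous.mul continuous_const ?_
  refine continuous_finset_sum _ fun a _ => continuous_finset_sum _ fun b _ => ?_
  refine Continuous.mul (Continuous.mul continuous_const ?_) (psi_continuous _)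
  exact Real.continuous_exp.comp ((continuous_id.neg).mul continuous_const)

end Final

/-- The recursion for `ψ_β`: for any partition `γ` of `[n]` with at least two blocks,
`ψ_β(γ) = −∫_0^β ∑_{σ∈q(γ)} W_σ e^{−β' W_σ} ψ_{β'}(P_σ γ) dβ'` (the unordered-pair sum
being written as half of the ordered double sum over pairs of distinct blocks). -/
theorem stmt11 (n : ℕ) (V : Sym2 (Fin n) → ℝ) (β : ℝ)
    (γ : Finset (Finset (Fin n))) (hγ : isSetPartition n γ) (hcard : 2 ≤ γ.card) :
    psi n V β γ =
      - ∫ β' in (0 : ℝ)..β, (1 / 2) *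
          ∑ α ∈ γ, ∑ α' ∈ γ.erase α,
            blockW n V α α' * Real.exp (-β' * blockW n V α α') *
              psi n V β' (mergeP n γ α α') := by
  classical
  have hderiv : ∀ t ∈ Set.uIcc (0:ℝ) β, HasDerivAt (fun b => psi n V b γ)
      (-((1/2 : ℝ) * ∑ α ∈ γ, ∑ α' ∈ γ.erase α,
        blockW n V α α' * Real.exp (-t * blockW n V α α') *
          psi n V t (mergeP n γ α α'))) t := by
    intro t _
    have h := psi_hasDerivAt (V := V) γ t
    rwa [key hγ t] at h
  have hInt : IntervalIntegrable
      (fun t => -((1/2 : ℝ) * ∑ α ∈ γ, ∑ α' ∈ γ.erase α,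
        blockW n V α α' * Real.exp (-t * blockW n V α α') *
          psi n V t (mergeP n γ α α'))) MeasureTheory.volume 0 β :=
    ((integrand_continuous (V := V) γ).neg).intervalIntegrable 0 β
  have hFTC := intervalIntegral.integral_eq_sub_of_hasDerivAt hderiv hInt
  rw [psi_zero (V := V) hcard, sub_zero, intervalIntegral.integral_neg] at hFTC
  exact hFTC.symm
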